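/- arXiv:1305.0646 — 6 statements merged into one kernel-verified Lean document; each statement's English description precedes it below -/
import Mathlib

section
/- For the trapezoidal rule symbol δ(ξ) = 2(1-ξ)/(1+ξ), the convolution quadrature basis functions are φ_j(t) = (-1)^j (ℓ_j(4t) - ℓ_{j-1}(4t)), where ℓ_j(x) = e^{-x/2} L_j(x) is the j-th Laguerre function and L_{-1} ≡ 0; i.e., Σ_{j≥0} φ_j(t) ξ^j = e^{-2(1-ξ)t/(1+ξ)} for |ξ| < 1. -/
/-- For the trapezoidal rule symbol `δ(ξ) = 2(1-ξ)/(1+ξ)`, the CQ basis functions are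
`φ_j(t) = (-1)^j (ℓ_j(4t) - ℓ_{j-1}(4t))` where `ℓ_j(x) = e^{-x/2} L_j(x)` and `L_{-1} ≡ 0`;
i.e. `Σ_{j≥0} φ_j(t) ξ^j = e^{-2(1-ξ)t/(1+ξ)}` for `|ξ| < 1`. -/
theorem stmt_5 (L : ℤ → ℝ → ℝ)
    (hneg : ∀ j : ℤ, j < 0 → ∀ x : ℝ, L j x = 0)
    (hgen : ∀ x z : ℝ, |z| < 1 →
      HasSum (fun j : ℕ => L (j : ℤ) x * z ^ j) ((1 - z)⁻¹ * Real.exp (-x * z / (1 - z))))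
    (t : ℝ) (ξ : ℝ) (hξ : |ξ| < 1) :
    HasSum (fun j : ℕ =>
        ((-1 : ℝ) ^ j *
          (Real.exp (-(4 * t) / 2) * L (j : ℤ) (4 * t) -
            Real.exp (-(4 * t) / 2) * L ((j : ℤ) - 1) (4 * t))) * ξ ^ j)
      (Real.exp (-2 * (1 - ξ) * t / (1 + ξ))) := by
  set z : ℝ := -ξ with hzdef
  have hz : |z| < 1 := by rw [hzdef, abs_neg]; exact hξ
  have hz1 : (1 : ℝ) - z ≠ 0 := by
    have h1 : z < 1 := lt_of_abs_lt hz
    intro hc; linarith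
  have h := hgen (4 * t) z hz
  set S : ℝ := (1 - z)⁻¹ * Real.exp (-(4 * t) * z / (1 - z)) with hS
  -- shifted sum
  set g : ℕ → ℝ := fun n => L ((n : ℤ) - 1) (4 * t) * z ^ n with hg
  have hgs : (fun n : ℕ => g (n + 1)) = fun n : ℕ => z * (L (n : ℤ) (4 * t) * z ^ n) := by
    funext n
    simp only [hg]
    push_cast
    rw [show ((n : ℤ) + 1 - 1) = (n : ℤ) by ring]
    ring
  have hmul : HasSum (fun n : ℕ => g (n + 1)) (z * S) := by
    rw [hgs]; exact h.mul_left z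
  have hshift : HasSum g (z * S) := by
    have h0 : g 0 = 0 := by
      simp only [hg]
      rw [show ((0 : ℕ) : ℤ) - 1 = (-1 : ℤ) by ring, hneg (-1) (by norm_num)]
      ring
    have := (hasSum_nat_add_iff 1).mp hmul
    simpa [h0] using this
  have hfinal := (h.sub hshift).mul_left (Real.exp (-(4 * t) / 2))
  convert hfinal using 1
  · rfl
  · funext j
    have hpow : z ^ j = (-1 : ℝ) ^ j * ξ ^ j := by
      rw [hzdef, neg_pow]
    simp only [hg, hpow]
    ring_nf
  · have hξ1 : (1 : ℝ) + ξ ≠ 0 := by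
      intro hc; rw [hzdef] at hz1; exact hz1 (by linarith)
    have hSzS : S - z * S = Real.exp (-(4 * t) * z / (1 - z)) := by
      rw [hS]; field_simp
    rw [hSzS, ← Real.exp_add]
    congr 1
    rw [hzdef]
    rw [show (1:ℝ) - -ξ = 1 + ξ by ring]
    field_simp
    ring
end

section
/- The uniform B-splines satisfy the linear reproduction identity Σ_{j∈ℤ} (j + (m+1)/2) · b^m(τ - j) = τ for all τ ∈ ℝ and every m ≥ 1. -/
/-- The uniform B-spline of degree `m` on knots `0, 1, …, m+1`. -/
noncomputable def bspline : ℕ → ℝ → ℝ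
  | 0, τ => if 0 ≤ τ ∧ τ < 1 then 1 else 0
  | m + 1, τ =>
      (τ / (m + 1)) * bspline m τ + (((m : ℝ) + 2 - τ) / (m + 1)) * bspline m (τ - 1)

private lemma hasSum_congr' {f g : ℤ → ℝ} {a : ℝ} (h : HasSum f a) (he : ∀ j, g j = f j) :
    HasSum g a := (funext he : g = f) ▸ h

private lemma hasSum_val {f : ℤ → ℝ} {a b : ℝ} (h : HasSum f a) (he : a = b) :
    HasSum f b := he ▸ h

private lemma bspline_eq_zero : ∀ (m : ℕ) (t : ℝ), (t < 0 ∨ (m : ℝ) + 1 ≤ t) → bspline m t = 0 := by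
  intro m
  induction m with
  | zero =>
    intro t ht
    simp only [bspline, Nat.cast_zero] at ht ⊢
    rcases ht with h | h
    · rw [if_neg]; rintro ⟨h1, _⟩; linarith
    · rw [if_neg]; rintro ⟨_, h2⟩; linarith
  | succ m ih =>
    intro t ht
    push_cast at ht
    simp only [bspline]
    have h1 : t < 0 ∨ (m : ℝ) + 1 ≤ t := by
      rcases ht with h | h
      · exact Or.inl h
      · exact Or.inr (by linarith)
    have h2 : t - 1 < 0 ∨ (m : ℝ) + 1 ≤ t - 1 := by
      rcases ht with h | h
      · exact Or.inl (by linarith)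
      · exact Or.inr (by linarith)
    rw [ih t h1, ih (t - 1) h2]
    ring

private lemma bspline_summable (m : ℕ) (τ : ℝ) (c : ℤ → ℝ) :
    Summable (fun j : ℤ => c j * bspline m (τ - (j : ℝ))) := by
  apply summable_of_ne_finset_zero (s := Finset.Icc (⌊τ⌋ - m) ⌊τ⌋)
  intro j hj
  simp only [Finset.mem_Icc, not_and_or, not_le] at hj
  have hfl : (⌊τ⌋ : ℝ) ≤ τ := Int.floor_le τ
  have hfl2 : τ < (⌊τ⌋ : ℝ) + 1 := Int.lt_floor_add_one τ
  rw [bspline_eq_zero m (τ - j), mul_zero]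
  rcases hj with h | h
  · right
    have h' : (j : ℝ) + m + 1 ≤ (⌊τ⌋ : ℝ) := by exact_mod_cast (by omega : j + (m : ℤ) + 1 ≤ ⌊τ⌋)
    linarith
  · left
    have h' : (⌊τ⌋ : ℝ) + 1 ≤ (j : ℝ) := by exact_mod_cast h
    linarith

private lemma shift_hasSum {f : ℤ → ℝ} {a : ℝ} (h : HasSum f a) :
    HasSum (fun j : ℤ => f (j + 1)) a :=
  ((Equiv.addRight (1 : ℤ)).hasSum_iff).mpr h

private lemma bspline_sums (m : ℕ) (τ : ℝ) :
    HasSum (fun j : ℤ => bspline m (τ - (j : ℝ))) 1 ∧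
    HasSum (fun j : ℤ => (j : ℝ) * bspline m (τ - (j : ℝ)))
      (if m = 0 then (⌊τ⌋ : ℝ) else τ - ((m : ℝ) + 1) / 2) := by
  induction m generalizing τ with
  | zero =>
    have key : ∀ j : ℤ, bspline 0 (τ - (j : ℝ)) = if j = ⌊τ⌋ then (1 : ℝ) else 0 := by
      intro j
      simp only [bspline]
      by_cases hj : j = ⌊τ⌋
      · subst hj
        have h1 : (⌊τ⌋ : ℝ) ≤ τ := Int.floor_le τ
        have h2 : τ < (⌊τ⌋ : ℝ) + 1 := Int.lt_floor_add_one τ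
        rw [if_pos ⟨by linarith, by linarith⟩, if_pos rfl]
      · rw [if_neg, if_neg hj]
        rintro ⟨h1, h2⟩
        exact hj ((Int.floor_eq_iff.mpr ⟨by linarith, by linarith⟩).symm)
    constructor
    · exact hasSum_congr' (hasSum_ite_eq ⌊τ⌋ 1) key
    · rw [if_pos rfl]
      refine hasSum_congr' (hasSum_ite_eq ⌊τ⌋ ((⌊τ⌋ : ℝ))) ?_
      intro j
      rw [key j]
      by_cases hj : j = ⌊τ⌋ <;> simp [hj]
  | succ m ih =>
    obtain ⟨hP, hM⟩ := ih τ
    set μ : ℝ := if m = 0 then (⌊τ⌋ : ℝ) else τ - ((m : ℝ) + 1) / 2 with hμ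
    have hm1 : (m : ℝ) + 1 ≠ 0 := by positivity
    have unf : ∀ j : ℤ, bspline (m + 1) (τ - (j : ℝ)) =
        ((τ - j) / ((m : ℝ) + 1)) * bspline m (τ - (j : ℝ))
          + (((m : ℝ) + 2 - (τ - j)) / ((m : ℝ) + 1)) * bspline m (τ - (j : ℝ) - 1) := by
      intro j; simp only [bspline]
    have argshift : ∀ j : ℤ, τ - ((j : ℤ) + 1 : ℤ) = τ - (j : ℝ) - 1 := by
      intro j; push_cast; ring
    constructor
    · -- partition of unity
      have hg : HasSum (fun j : ℤ => ((τ - j) / ((m : ℝ) + 1)) * bspline m (τ - (j : ℝ)))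
          ((τ - μ) / ((m : ℝ) + 1)) := by
        refine hasSum_congr' (hasSum_val (((hP.mul_left τ).sub hM).div_const ((m : ℝ) + 1))
          (by ring)) ?_
        intro j; ring
      have hh' : HasSum (fun k : ℤ => (((m : ℝ) + 1 - τ + k) / ((m : ℝ) + 1))
            * bspline m (τ - (k : ℝ))) (((m : ℝ) + 1 - τ + μ) / ((m : ℝ) + 1)) := by
        refine hasSum_congr' (hasSum_val (((hP.mul_left ((m : ℝ) + 1 - τ)).add hM).div_const
          ((m : ℝ) + 1)) (by ring)) ?_
        intro j; ring
      have hh := shift_hasSum hh'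
      have total := hg.add hh
      refine hasSum_val (hasSum_congr' total ?_) ?_
      · intro j
        rw [unf j]
        rw [argshift j]
        push_cast
        ring
      · field_simp
        ring
    · -- first moment
      have hcomb : HasSum (fun j : ℤ =>
            (((m : ℝ) * j + (τ - (m : ℝ) - 1)) / ((m : ℝ) + 1)) * bspline m (τ - (j : ℝ)))
          (((m : ℝ) * μ + (τ - (m : ℝ) - 1)) / ((m : ℝ) + 1)) := by
        refine hasSum_congr' (hasSum_val (((hM.mul_left (m : ℝ)).add
          (hP.mul_left (τ - (m : ℝ) - 1))).div_const ((m : ℝ) + 1)) (by ring)) ?_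
        intro j; ring
      -- split into the two pieces using summability
      set g : ℤ → ℝ := fun j => ((j : ℝ) * (τ - j) / ((m : ℝ) + 1)) * bspline m (τ - (j : ℝ))
        with hg_def
      set h' : ℤ → ℝ := fun k => (((k : ℝ) - 1) * ((m : ℝ) + 1 - τ + k) / ((m : ℝ) + 1))
          * bspline m (τ - (k : ℝ)) with hh'_def
      have hgs : Summable g := bspline_summable m τ _
      have hh's : Summable h' := bspline_summable m τ _
      have hsum_eq : (∑' j, g j) + (∑' k, h' k)
          = ((m : ℝ) * μ + (τ - (m : ℝ) - 1)) / ((m : ℝ) + 1) := by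
        have h1 : HasSum (fun j => g j + h' j) ((∑' j, g j) + (∑' k, h' k)) :=
          hgs.hasSum.add hh's.hasSum
        refine h1.unique (hasSum_congr' hcomb ?_)
        intro j
        simp only [hg_def, hh'_def]
        field_simp
        ring
      have total := hgs.hasSum.add (shift_hasSum hh's.hasSum)
      rw [hsum_eq] at total
      refine hasSum_val (hasSum_congr' total ?_) ?_
      · intro j
        rw [unf j]
        simp only [hg_def, hh'_def]
        rw [argshift j]
        push_cast
        ring
      · rw [if_neg (Nat.succ_ne_zero m)]
        rcases eq_or_ne m 0 with h0 | h0
        · subst h0; simp only [hμ, if_pos rfl]; push_cast; ring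
        · rw [hμ, if_neg h0]; field_simp; push_cast; ring

/-- Linear reproduction: `Σ_{j∈ℤ} (j + (m+1)/2) b^m(τ - j) = τ` for all `τ` and `m ≥ 1`. -/
theorem stmt_11 (m : ℕ) (hm : 1 ≤ m) (τ : ℝ) :
    HasSum (fun j : ℤ => ((j : ℝ) + ((m : ℝ) + 1) / 2) * bspline m (τ - (j : ℝ))) τ := by
  obtain ⟨hP, hM⟩ := bspline_sums m τ
  rw [if_neg (by omega : m ≠ 0)] at hM
  refine hasSum_val (hasSum_congr' (hM.add (hP.mul_left (((m : ℝ) + 1) / 2))) ?_) (by ring)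
  intro j; ring
end

section
/- For the degree-m isogeometric B-spline scheme applied to the constant kernel K ≡ 1, the weights are q_j = h·(j+1)/(m+1) for 0 ≤ j ≤ m-1 and q_j = h for j ≥ m, and consequently the Z-transform of the weights equals Q_m(ξ) = h(1 - ξ^{m+1}) / ((m+1)(1-ξ)²) for |ξ| < 1. -/
/-- Knots `t_j = jh` for `j ≥ 0`, with `m` repeated knots at `0` (here `t_j = 0` for `j ≤ 0`). -/
noncomputable def knot (h : ℝ) (j : ℤ) : ℝ := h * max (j : ℝ) 0

/-- Cox–de Boor recursion for the isogeometric B-splines on `[0,∞)` (with the convention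
`0/0 = 0`, automatic since division by zero is zero in Lean). `isoBspline h m j` is the degree
`m` B-spline `b^m_j` on the knots `knot h`. -/
noncomputable def isoBspline (h : ℝ) : ℕ → ℤ → ℝ → ℝ
  | 0, j, t => if knot h j ≤ t ∧ t < knot h (j + 1) then 1 else 0
  | m + 1, j, t =>
      ((t - knot h j) / (knot h (j + (m : ℤ) + 1) - knot h j)) * isoBspline h m j t +
        ((knot h (j + (m : ℤ) + 2) - t) / (knot h (j + (m : ℤ) + 2) - knot h (j + 1))) *
          isoBspline h m (j + 1) t

open MeasureTheory

/-- complete homogeneous symmetric polynomial `h_k(t_j, ..., t_{j+n})` of the knots -/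
noncomputable def Hsym (h : ℝ) : ℕ → ℕ → ℤ → ℝ
  | 0, _, _ => 1
  | k + 1, 0, j => knot h j ^ (k + 1)
  | k + 1, n + 1, j =>
      Hsym h (k + 1) n j + knot h (j + (n : ℤ) + 1) * Hsym h k (n + 1) j
termination_by k n _ => (k, n)

lemma Hsym_zero (h : ℝ) (n : ℕ) (j : ℤ) : Hsym h 0 n j = 1 := by
  cases n <;> simp [Hsym]

lemma Hsym_succ_zero (h : ℝ) (k : ℕ) (j : ℤ) : Hsym h (k+1) 0 j = knot h j ^ (k+1) := by
  simp [Hsym]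

lemma Hsym_succ_succ (h : ℝ) (k n : ℕ) (j : ℤ) :
    Hsym h (k+1) (n+1) j = Hsym h (k+1) n j + knot h (j + (n : ℤ) + 1) * Hsym h k (n+1) j := by
  rw [Hsym]

lemma Hsym_pair (h : ℝ) (k : ℕ) (j : ℤ) :
    knot h j ^ (k+1) - knot h (j+1) ^ (k+1) = (knot h j - knot h (j+1)) * Hsym h k 1 j := by
  induction k with
  | zero => simp [Hsym_zero]
  | succ k ih =>
      have e : Hsym h (k+1) 1 j = knot h j ^ (k+1) + knot h (j+1) * Hsym h k 1 j := by
        have e1 := Hsym_succ_succ h k 0 j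
        have hz : j + ((0:ℕ):ℤ) + 1 = j + 1 := by norm_num
        rw [hz] at e1
        rw [e1, Hsym_succ_zero]
      rw [e]
      linear_combination knot h (j+1) * ih

lemma Hsym_front (h : ℝ) : ∀ (n : ℕ) (k : ℕ) (j : ℤ),
    Hsym h (k+1) (n+1) j = Hsym h (k+1) n (j+1) + knot h j * Hsym h k (n+1) j := by
  intro n
  induction n with
  | zero =>
      intro k j
      have e1 := Hsym_succ_succ h k 0 j
      have hz : j + ((0:ℕ):ℤ) + 1 = j + 1 := by norm_num
      rw [hz] at e1
      rw [e1, Hsym_succ_zero, Hsym_succ_zero]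
      linear_combination Hsym_pair h k j
  | succ n ihn =>
      intro k
      induction k with
      | zero =>
          intro j
          have L := Hsym_succ_succ h 0 (n+1) j
          have R := Hsym_succ_succ h 0 n (j+1)
          have A := ihn 0 j
          have i1 : j + ((n:ℤ)+1) + 1 = j + (n:ℤ) + 2 := by ring
          have i2 : j + 1 + (n:ℤ) + 1 = j + (n:ℤ) + 2 := by ring
          push_cast at L R A ⊢
          rw [i1] at L
          rw [i2] at R
          simp only [Hsym_zero] at *
          linarith
      | succ k ihk =>
          intro j
          have L := Hsym_succ_succ h (k+1) (n+1) j
          have R := Hsym_succ_succ h (k+1) n (j+1)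
          have A := ihn (k+1) j
          have B1 := Hsym_succ_succ h k (n+1) j
          have B2 := ihk j
          have i1 : j + ((n:ℤ)+1) + 1 = j + (n:ℤ) + 2 := by ring
          have i2 : j + 1 + (n:ℤ) + 1 = j + (n:ℤ) + 2 := by ring
          push_cast at L R A B1 B2 ⊢
          rw [i1] at L B1
          rw [i2] at R
          linear_combination L + A - R - knot h j * B1 + knot h (j + (n:ℤ) + 2) * B2

lemma Hsym_eq_zero (h : ℝ) (k : ℕ) : ∀ (n : ℕ) (j : ℤ),
    (∀ i : ℤ, j ≤ i → i ≤ j + n → knot h i = 0) → Hsym h (k+1) n j = 0 := by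
  intro n
  induction n with
  | zero =>
      intro j hz
      rw [Hsym_succ_zero, hz j le_rfl (by omega)]
      simp
  | succ n ihn =>
      intro j hz
      rw [Hsym_succ_succ, ihn j (fun i h1 h2 => hz i h1 (by omega)),
        hz (j + (n:ℤ) + 1) (by omega) (by omega)]
      simp

lemma knot_of_nonpos {h : ℝ} {j : ℤ} (hj : j ≤ 0) : knot h j = 0 := by
  have : max (j:ℝ) 0 = 0 := max_eq_right (by exact_mod_cast hj)
  simp [knot, this]

lemma knot_of_nonneg {h : ℝ} {j : ℤ} (hj : 0 ≤ j) : knot h j = h * j := by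
  have : max (j:ℝ) 0 = j := max_eq_left (by exact_mod_cast hj)
  simp [knot, this]

lemma knot_nonneg {h : ℝ} (hh : 0 ≤ h) (j : ℤ) : 0 ≤ knot h j :=
  mul_nonneg hh (le_max_right _ _)

lemma knot_mono {h : ℝ} (hh : 0 ≤ h) {a b : ℤ} (hab : a ≤ b) : knot h a ≤ knot h b := by
  apply mul_le_mul_of_nonneg_left _ hh
  exact max_le_max (by exact_mod_cast hab) le_rfl

lemma knot_collapse {h : ℝ} (hh : 0 < h) {a b : ℤ} (hab : a < b)
    (he : knot h a = knot h b) : b ≤ 0 := by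
  by_contra hb
  push_neg at hb
  have h1 : knot h b = h * b := knot_of_nonneg (by omega)
  have h3 : max (a:ℝ) 0 < (b:ℝ) := by
    apply max_lt
    · exact_mod_cast hab
    · exact_mod_cast hb
  have : knot h a < knot h b := by
    rw [h1]
    calc knot h a = h * max (a:ℝ) 0 := rfl
    _ < h * b := by exact mul_lt_mul_of_pos_left h3 hh
  linarith [this, he.le]

lemma isoBspline_zero_eq (h : ℝ) (j : ℤ) (t : ℝ) :
    isoBspline h 0 j t = if knot h j ≤ t ∧ t < knot h (j + 1) then 1 else 0 := rfl

lemma spline_step (h : ℝ) (m k : ℕ) (j : ℤ) (t : ℝ) :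
    t^k * isoBspline h (m+1) j t
      = (1/(knot h (j + (m:ℤ) + 1) - knot h j)) *
          (t^(k+1) * isoBspline h m j t - knot h j * (t^k * isoBspline h m j t))
        + (1/(knot h (j + (m:ℤ) + 2) - knot h (j+1))) *
          (knot h (j + (m:ℤ) + 2) * (t^k * isoBspline h m (j+1) t)
            - t^(k+1) * isoBspline h m (j+1) t) := by
  rw [isoBspline]
  ring

lemma indicator_form (k : ℕ) (a b : ℝ) :
    (fun t : ℝ => t^k * (if a ≤ t ∧ t < b then (1:ℝ) else 0))
      = (Set.Ico a b).indicator (fun t => t^k) := by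
  funext t
  by_cases ht : a ≤ t ∧ t < b <;>
    simp [Set.indicator_apply, Set.mem_Ico, ht]

lemma base_integral (k : ℕ) (a b : ℝ) (ha : 0 ≤ a) (hab : a ≤ b) :
    ∫ t in Set.Ioi (0:ℝ), t^k * (if a ≤ t ∧ t < b then (1:ℝ) else 0)
      = (b^(k+1) - a^(k+1))/(k+1) := by
  rw [indicator_form, setIntegral_indicator measurableSet_Ico]
  have h2 : (Set.Ioi (0:ℝ) ∩ Set.Ico a b : Set ℝ) =ᵐ[volume] (Set.Ioc a b : Set ℝ) := by
    rw [MeasureTheory.ae_eq_set]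
    constructor
    · refine measure_mono_null (fun x hx => ?_) (measure_singleton a)
      obtain ⟨⟨hx0, hxa, hxb⟩, hnt⟩ := hx
      simp only [Set.mem_Ioc, not_and_or, not_lt, not_le] at hnt
      have : x = a := by rcases hnt with h' | h' <;> linarith
      simp [this]
    · refine measure_mono_null (fun x hx => ?_) (measure_singleton b)
      obtain ⟨⟨hxa, hxb⟩, hnt⟩ := hx
      simp only [Set.mem_inter_iff, Set.mem_Ioi, Set.mem_Ico, not_and_or, not_lt, not_le] at hnt
      have : x = b := by
        rcases hnt with h' | h' | h' <;> [linarith; linarith; linarith]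
      simp [this]
  rw [setIntegral_congr_set h2, ← intervalIntegral.integral_of_le hab, integral_pow]

lemma base_integrable (k : ℕ) (a b : ℝ) :
    IntegrableOn (fun t : ℝ => t^k * (if a ≤ t ∧ t < b then (1:ℝ) else 0)) (Set.Ioi 0) := by
  rw [indicator_form]
  exact (IntegrableOn.integrable_indicator
    (((continuous_pow k).integrableOn_Icc).mono_set Set.Ico_subset_Icc_self)
    measurableSet_Ico).integrableOn

lemma integrableOn_pow_spline (h : ℝ) : ∀ (m k : ℕ) (j : ℤ),
    IntegrableOn (fun t => t^k * isoBspline h m j t) (Set.Ioi 0) := by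
  intro m
  induction m with
  | zero =>
      intro k j
      have e : (fun t : ℝ => t^k * isoBspline h 0 j t)
          = fun t : ℝ => t^k * (if knot h j ≤ t ∧ t < knot h (j+1) then (1:ℝ) else 0) := by
        funext t; rw [isoBspline_zero_eq]
      rw [e]
      exact base_integrable k _ _
  | succ m ih =>
      intro k j
      rw [show (fun t => t^k * isoBspline h (m+1) j t)
          = fun t => (1/(knot h (j + (m:ℤ) + 1) - knot h j)) *
              (t^(k+1) * isoBspline h m j t - knot h j * (t^k * isoBspline h m j t))
            + (1/(knot h (j + (m:ℤ) + 2) - knot h (j+1))) *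
              (knot h (j + (m:ℤ) + 2) * (t^k * isoBspline h m (j+1) t)
                - t^(k+1) * isoBspline h m (j+1) t) from funext (spline_step h m k j)]
      exact ((((ih (k+1) j).sub ((ih k j).const_mul _)).const_mul _)).add
        ((((ih k (j+1)).const_mul _).sub (ih (k+1) (j+1))).const_mul _)

lemma fact_id (m k : ℕ) :
    (k.factorial * m.factorial : ℝ)/(m+k+1).factorial
      - ((k+1).factorial * m.factorial : ℝ)/(m+k+2).factorial
    = (k.factorial * (m+1).factorial : ℝ)/(m+k+2).factorial := by
  have h1 : ((m+k+2).factorial : ℝ) = (m+k+2) * (m+k+1).factorial := by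
    exact_mod_cast Nat.factorial_succ (m+k+1)
  have h2 : ((k+1).factorial : ℝ) = (k+1) * k.factorial := by
    exact_mod_cast Nat.factorial_succ k
  have h3 : ((m+1).factorial : ℝ) = (m+1) * m.factorial := by
    exact_mod_cast Nat.factorial_succ m
  have hne : ((m+k+1).factorial : ℝ) ≠ 0 := by
    exact_mod_cast Nat.factorial_ne_zero (m+k+1)
  rw [h1, h2, h3]
  field_simp
  ring

/-- difference identity for `Hsym` needed in the induction -/
lemma Hsym_diff (h : ℝ) (k m : ℕ) (j : ℤ) :
    knot h (j + (m:ℤ) + 2) * Hsym h k (m+1) (j+1) - knot h j * Hsym h k (m+1) j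
      = (knot h (j + (m:ℤ) + 2) - knot h j) * Hsym h k (m+2) j := by
  cases k with
  | zero => simp only [Hsym_zero]; ring
  | succ k' =>
      have E3 := Hsym_succ_succ h k' (m+1) j
      rw [show (j + ((m+1:ℕ):ℤ) + 1) = j + (m:ℤ) + 2 from by push_cast; ring] at E3
      have E4 := Hsym_front h (m+1) k' j
      linear_combination knot h j * E3 - knot h (j + (m:ℤ) + 2) * E4

lemma Hsym_diff' (h : ℝ) (k m : ℕ) (j : ℤ) :
    Hsym h (k+1) (m+1) j - Hsym h (k+1) (m+1) (j+1)
      = (knot h j - knot h (j + (m:ℤ) + 2)) * Hsym h k (m+2) j := by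
  have E1 := Hsym_succ_succ h k (m+1) j
  rw [show (j + ((m+1:ℕ):ℤ) + 1) = j + (m:ℤ) + 2 from by push_cast; ring] at E1
  have E2 := Hsym_front h (m+1) k j
  linear_combination E2 - E1

lemma integral_pow_spline (h : ℝ) (hh : 0 < h) : ∀ (m k : ℕ) (j : ℤ),
    ∫ t in Set.Ioi (0:ℝ), t^k * isoBspline h m j t
      = (knot h (j + (m:ℤ) + 1) - knot h j)
        * ((k.factorial * m.factorial : ℝ) / (m+k+1).factorial) * Hsym h k (m+1) j := by
  intro m
  induction m with
  | zero =>
      intro k j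
      have hcast : j + ((0:ℕ):ℤ) + 1 = j + 1 := by norm_num
      rw [hcast]
      rcases le_or_gt 0 j with hj | hj
      · have ha : (0:ℝ) ≤ knot h j := knot_nonneg hh.le j
        have hab : knot h j ≤ knot h (j+1) := knot_mono hh.le (by omega)
        have e : ∫ t in Set.Ioi (0:ℝ), t^k * isoBspline h 0 j t
            = ∫ t in Set.Ioi (0:ℝ),
                t^k * (if knot h j ≤ t ∧ t < knot h (j+1) then (1:ℝ) else 0) := by
          apply setIntegral_congr_fun measurableSet_Ioi
          intro t _
          simp only [isoBspline_zero_eq]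
        rw [e, base_integral k _ _ ha hab]
        have hp := Hsym_pair h k j
        have hp2 : knot h (j+1)^(k+1) - knot h j^(k+1)
            = (knot h (j+1) - knot h j) * Hsym h k 1 j := by linear_combination -hp
        rw [hp2, show ((0+k+1).factorial : ℝ) = (k+1) * k.factorial from by
          norm_num [Nat.factorial_succ]]
        have hk1 : ((k:ℝ)+1) ≠ 0 := by positivity
        have hkf : (k.factorial : ℝ) ≠ 0 := by exact_mod_cast Nat.factorial_ne_zero k
        norm_num [Nat.factorial_zero]
        field_simp
      · have h0 : knot h j = 0 := knot_of_nonpos (by omega)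
        have h1 : knot h (j+1) = 0 := knot_of_nonpos (by omega)
        have e : ∫ t in Set.Ioi (0:ℝ), t^k * isoBspline h 0 j t = 0 := by
          have hz : ∀ t : ℝ, t^k * isoBspline h 0 j t = 0 := by
            intro t
            rw [isoBspline_zero_eq, h0, h1]
            rw [if_neg (by rintro ⟨ht1, ht2⟩; linarith)]
            ring
          simp [funext hz]
        rw [e, h1, h0]
        ring
  | succ m ih =>
      intro k j
      have hidx1 : (j : ℤ) + ((m+1 : ℕ) : ℤ) + 1 = j + (m:ℤ) + 2 := by push_cast; ring
      have hidx2 : (j+1) + (m:ℤ) + 1 = j + (m:ℤ) + 2 := by ring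
      rw [hidx1]
      rw [setIntegral_congr_fun measurableSet_Ioi
        (fun t _ => spline_step h m k j t)]
      have i1 : IntegrableOn (fun t : ℝ =>
          t^(k+1) * isoBspline h m j t - knot h j * (t^k * isoBspline h m j t))
          (Set.Ioi 0) :=
        (integrableOn_pow_spline h m (k+1) j).sub
          ((integrableOn_pow_spline h m k j).const_mul _)
      have i2 : IntegrableOn (fun t : ℝ =>
          knot h (j + (m:ℤ) + 2) * (t^k * isoBspline h m (j+1) t)
            - t^(k+1) * isoBspline h m (j+1) t) (Set.Ioi 0) :=
        ((integrableOn_pow_spline h m k (j+1)).const_mul _).sub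
          (integrableOn_pow_spline h m (k+1) (j+1))
      rw [integral_add (i1.const_mul _) (i2.const_mul _), integral_const_mul, integral_const_mul,
        integral_sub (integrableOn_pow_spline h m (k+1) j)
          ((integrableOn_pow_spline h m k j).const_mul _),
        integral_sub ((integrableOn_pow_spline h m k (j+1)).const_mul _)
          (integrableOn_pow_spline h m (k+1) (j+1)),
        integral_const_mul, integral_const_mul]
      have ihA := ih (k+1) j
      have ihY := ih k j
      have ihY' := ih k (j+1)
      have ihA' := ih (k+1) (j+1)
      rw [hidx2] at ihY' ihA'
      rw [ihA, ihY, ihY', ihA']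
      -- normalize factorial indices
      rw [show m+(k+1)+1 = m+k+2 from by ring, show (m+1)+k+1 = m+k+2 from by ring]
      have P1 : (1/(knot h (j + (m:ℤ) + 1) - knot h j)) *
            ((knot h (j + (m:ℤ) + 1) - knot h j) *
                (((k+1).factorial * m.factorial : ℝ)/(m+k+2).factorial) * Hsym h (k+1) (m+1) j
              - knot h j * ((knot h (j + (m:ℤ) + 1) - knot h j) *
                  ((k.factorial * m.factorial : ℝ)/(m+k+1).factorial) * Hsym h k (m+1) j))
          = (((k+1).factorial * m.factorial : ℝ)/(m+k+2).factorial) * Hsym h (k+1) (m+1) j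
            - knot h j * (((k.factorial * m.factorial : ℝ)/(m+k+1).factorial)
              * Hsym h k (m+1) j) := by
        by_cases hd : knot h (j + (m:ℤ) + 1) - knot h j = 0
        · have he : knot h (j + (m:ℤ) + 1) = knot h j := by linarith
          have hcol : j + (m:ℤ) + 1 ≤ 0 :=
            knot_collapse hh (show j < j + (m:ℤ) + 1 by omega) he.symm
          have hA0 : Hsym h (k+1) (m+1) j = 0 :=
            Hsym_eq_zero h k (m+1) j
              (fun i hi1 hi2 => knot_of_nonpos (by push_cast at hi2; omega))
          have htj0 : knot h j = 0 := knot_of_nonpos (by omega)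
          rw [hd, hA0, htj0]
          simp
        · field_simp
      have P2 : (1/(knot h (j + (m:ℤ) + 2) - knot h (j+1))) *
            (knot h (j + (m:ℤ) + 2) * ((knot h (j + (m:ℤ) + 2) - knot h (j+1)) *
                ((k.factorial * m.factorial : ℝ)/(m+k+1).factorial) * Hsym h k (m+1) (j+1))
              - (knot h (j + (m:ℤ) + 2) - knot h (j+1)) *
                (((k+1).factorial * m.factorial : ℝ)/(m+k+2).factorial)
                  * Hsym h (k+1) (m+1) (j+1))
          = knot h (j + (m:ℤ) + 2) * (((k.factorial * m.factorial : ℝ)/(m+k+1).factorial)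
              * Hsym h k (m+1) (j+1))
            - (((k+1).factorial * m.factorial : ℝ)/(m+k+2).factorial)
              * Hsym h (k+1) (m+1) (j+1) := by
        by_cases hd : knot h (j + (m:ℤ) + 2) - knot h (j+1) = 0
        · have he : knot h (j + (m:ℤ) + 2) = knot h (j+1) := by linarith
          have hcol : j + (m:ℤ) + 2 ≤ 0 :=
            knot_collapse hh (show j + 1 < j + (m:ℤ) + 2 by omega) he.symm
          have hA0 : Hsym h (k+1) (m+1) (j+1) = 0 :=
            Hsym_eq_zero h k (m+1) (j+1)
              (fun i hi1 hi2 => knot_of_nonpos (by push_cast at hi2; omega))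
          have ht'0 : knot h (j + (m:ℤ) + 2) = 0 := knot_of_nonpos hcol
          rw [hd, hA0, ht'0]
          simp
        · field_simp
      rw [P1, P2]
      have HD := Hsym_diff h k m j
      have EA := Hsym_diff' h k m j
      have hc : (k.factorial * m.factorial : ℝ)/(m+k+1).factorial
          - ((k+1).factorial * m.factorial : ℝ)/(m+k+2).factorial
          = (k.factorial * (m+1).factorial : ℝ)/(m+k+2).factorial := fact_id m k
      linear_combination (((k+1).factorial * m.factorial : ℝ)/(m+k+2).factorial) * EA
        + ((k.factorial * m.factorial : ℝ)/(m+k+1).factorial) * HD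
        + (knot h (j + (m:ℤ) + 2) - knot h j) * Hsym h k (m+2) j * hc

/-- For the degree-`m` isogeometric B-spline scheme with constant kernel `K ≡ 1`, the weights
are `q_j = h(j+1)/(m+1)` for `0 ≤ j ≤ m-1` and `q_j = h` for `j ≥ m`, and hence
`Q_m(ξ) = h(1 - ξ^{m+1})/((m+1)(1-ξ)²)` for `|ξ| < 1`. -/
theorem stmt_12 (m : ℕ) (h : ℝ) (hh : 0 < h)
    (q : ℕ → ℝ)
    (hq : ∀ j : ℕ, q j = ∫ t in Set.Ioi (0 : ℝ), isoBspline h m ((j : ℤ) - (m : ℤ)) t) :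
    (∀ j : ℕ, j < m → q j = h * ((j : ℝ) + 1) / ((m : ℝ) + 1)) ∧
    (∀ j : ℕ, m ≤ j → q j = h) ∧
    (∀ ξ : ℝ, |ξ| < 1 →
      HasSum (fun j : ℕ => q j * ξ ^ j)
        (h * (1 - ξ ^ (m + 1)) / (((m : ℝ) + 1) * (1 - ξ) ^ 2))) := by
  have hm1 : ((m:ℝ)+1) ≠ 0 := by positivity
  have hmf : (m.factorial : ℝ) ≠ 0 := by exact_mod_cast Nat.factorial_ne_zero m
  have hqgen : ∀ j : ℕ, q j = (h * ((j:ℝ)+1) - knot h ((j:ℤ) - m)) / ((m:ℝ)+1) := by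
    intro j
    rw [hq j]
    have hint := integral_pow_spline h hh m 0 ((j:ℤ) - m)
    simp only [pow_zero, one_mul] at hint
    rw [hint, Hsym_zero, show ((j:ℤ) - m + (m:ℤ) + 1) = (j:ℤ) + 1 from by ring,
      knot_of_nonneg (show (0:ℤ) ≤ (j:ℤ)+1 from by omega),
      show ((m+0+1).factorial : ℝ) = ((m:ℝ)+1) * m.factorial from by
        norm_num [Nat.factorial_succ]]
    push_cast
    field_simp
    ring
  have hb1 : ∀ j : ℕ, j < m → q j = h * ((j : ℝ) + 1) / ((m : ℝ) + 1) := by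
    intro j hj
    rw [hqgen j, knot_of_nonpos (show (j:ℤ) - m ≤ 0 from by omega)]
    ring
  have hb2 : ∀ j : ℕ, m ≤ j → q j = h := by
    intro j hj
    rw [hqgen j, knot_of_nonneg (show (0:ℤ) ≤ (j:ℤ) - m from by omega)]
    push_cast
    field_simp
    ring
  refine ⟨hb1, hb2, ?_⟩
  intro ξ hξ
  have hξ1 : ξ ≠ 1 := by
    intro he; rw [he] at hξ; norm_num at hξ
  have h1ξ : (1:ℝ) - ξ ≠ 0 := fun he => hξ1 (by linarith)
  set c : ℝ := h / ((m:ℝ)+1) with hc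
  have hgeq : ∀ j : ℕ, q j * ξ^j
      = ∑ i ∈ Finset.range (m+1), (if i ≤ j then c * ξ^j else 0) := by
    intro j
    rcases le_or_gt m j with hj | hj
    · rw [hb2 j hj,
        Finset.sum_congr rfl (fun i hi => if_pos (by
          simp only [Finset.mem_range] at hi; omega)),
        Finset.sum_const, Finset.card_range, nsmul_eq_mul, hc]
      push_cast
      field_simp
    · rw [hb1 j hj]
      have hsub : ∑ i ∈ Finset.range (m+1), (if i ≤ j then c * ξ^j else 0)
          = ∑ _i ∈ Finset.range (j+1), c * ξ^j := by
        rw [← Finset.sum_filter]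
        apply Finset.sum_congr _ (fun _ _ => rfl)
        ext i
        simp only [Finset.mem_filter, Finset.mem_range]
        omega
      rw [hsub, Finset.sum_const, Finset.card_range, nsmul_eq_mul, hc]
      push_cast
      field_simp
  rw [funext hgeq]
  have hterm : ∀ i ∈ Finset.range (m+1),
      HasSum (fun j : ℕ => if i ≤ j then c * ξ^j else 0) (c * ξ^i / (1-ξ)) := by
    intro i _
    have hg : HasSum (fun n : ℕ => (c * ξ^i) * ξ^n) ((c * ξ^i) * (1-ξ)⁻¹) :=
      (hasSum_geometric_of_abs_lt_one hξ).mul_left _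
    have hshift : (fun n : ℕ =>
        (fun j : ℕ => if i ≤ j then c * ξ^j else 0) (n + i))
        = fun n : ℕ => (c * ξ^i) * ξ^n := by
      funext n
      simp only [if_pos (show i ≤ n + i by omega), pow_add]
      ring
    have h2 := (hasSum_nat_add_iff
      (f := fun j : ℕ => if i ≤ j then c * ξ^j else 0) i).mp (hshift ▸ hg)
    have hz : ∑ n ∈ Finset.range i, (if i ≤ n then c * ξ^n else 0) = 0 :=
      Finset.sum_eq_zero (fun n hn => if_neg (by
        simp only [Finset.mem_range] at hn; omega))
    rw [hz, add_zero] at h2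
    rw [div_eq_mul_inv]
    exact h2
  have total := hasSum_sum hterm
  have hval : ∑ i ∈ Finset.range (m+1), c * ξ^i / (1-ξ)
      = h * (1 - ξ^(m+1)) / (((m:ℝ)+1) * (1-ξ)^2) := by
    have hg := geom_sum_eq hξ1 (m+1)
    calc ∑ i ∈ Finset.range (m+1), c * ξ^i / (1-ξ)
        = (c / (1-ξ)) * ∑ i ∈ Finset.range (m+1), ξ^i := by
          rw [Finset.mul_sum]
          exact Finset.sum_congr rfl (fun i _ => by ring)
      _ = (c / (1-ξ)) * ((ξ^(m+1) - 1)/(ξ - 1)) := by rw [hg]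
      _ = h * (1 - ξ^(m+1)) / (((m:ℝ)+1) * (1-ξ)^2) := by
          have hξ1' : ξ - 1 ≠ 0 := fun he => hξ1 (by linarith)
          rw [hc]
          field_simp
          ring
  rw [hval] at total
  exact total
end

section
/- Let (p_n) be defined by p_0 = 1 and the Z-transform relation P(ξ)(1 + ξ - ξ^M g(r,ξ)) = 1 - ξ, where g(r,ξ) = ξ + (1 - r + rξ)² and M ≥ 3 is an integer. Then for M+2 ≤ n ≤ 2M-1 one has p_n = 2(-1)^n + (-1)^{n+M}(2 - 4r² - 8r(1-r)(n-M)); in particular, if r ∈ (0,1) then |p_n| grows linearly in n on this range, so the m = 1 B-spline scheme for the step-function kernel is unstable. -/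
open Polynomial in
/-- For the `m = 1` B-spline scheme with step kernel: the stability coefficients `p_n`,
defined by `P(ξ)(1 + ξ - ξ^M g(r,ξ)) = 1 - ξ` with `g(r,ξ) = ξ + (1-r+rξ)²`, satisfy for
`M+2 ≤ n ≤ 2M-1`:
`p_n = 2(-1)^n + (-1)^{n+M}(2 - 4r² - 8r(1-r)(n-M))`. -/
theorem stmt_15 (M : ℕ) (hM : 3 ≤ M) (r : ℝ) (hr0 : 0 ≤ r) (hr1 : r < 1)
    (p : ℕ → ℝ) (hp0 : p 0 = 1)
    (hconv : ∀ n : ℕ,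
      (∑ j ∈ Finset.range (n + 1),
        ((1 + X - X ^ M * (X + (C (1 - r) + C r * X) ^ 2) : Polynomial ℝ).coeff j) *
          p (n - j))
        = (1 - X : Polynomial ℝ).coeff n) :
    ∀ n : ℕ, M + 2 ≤ n → n ≤ 2 * M - 1 →
      p n = 2 * (-1 : ℝ) ^ n +
        (-1 : ℝ) ^ (n + M) * (2 - 4 * r ^ 2 - 8 * r * (1 - r) * ((n : ℝ) - (M : ℝ))) := by
  -- Step 1: explicit form of the polynomial
  have hA : (1 + X - X ^ M * (X + (C (1 - r) + C r * X) ^ 2) : Polynomial ℝ)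
      = C 1 * X ^ 0 + C 1 * X ^ 1 - C ((1-r)^2) * X ^ M - C (1+2*r*(1-r)) * X ^ (M+1)
        - C (r^2) * X ^ (M+2) := by
    simp only [map_sub, map_add, map_mul, map_one, map_pow, map_ofNat]
    ring
  -- Step 2: the recurrence satisfied by p
  have key : ∀ n : ℕ, p n + (if 1 ≤ n then p (n-1) else 0)
      - (if M ≤ n then (1-r)^2 * p (n-M) else 0)
      - (if M+1 ≤ n then (1+2*r*(1-r)) * p (n-(M+1)) else 0)
      - (if M+2 ≤ n then r^2 * p (n-(M+2)) else 0)
      = (if n = 0 then 1 else 0) - (if n = 1 then 1 else 0) := by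
    intro n
    have h := hconv n
    rw [hA] at h
    simp only [coeff_add, coeff_sub, coeff_C_mul, coeff_X_pow, coeff_one, coeff_X,
      mul_ite, mul_one, mul_zero, add_mul, sub_mul, ite_mul, zero_mul,
      Finset.sum_add_distrib, Finset.sum_sub_distrib, Finset.sum_ite_eq',
      Finset.mem_range, Nat.lt_succ_iff] at h
    simp only [Nat.zero_le, if_true, one_mul, Nat.sub_zero, Nat.sub_sub] at h
    have e1 : (if n = 1 then (1:ℝ) else 0) = (if 1 = n then 1 else 0) := by simp [eq_comm]
    rw [e1, ← h]
    split_ifs <;> ring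
  -- Step 3: p n = 2(-1)^n for 1 ≤ n < M
  have hsmall : ∀ n : ℕ, 1 ≤ n → n < M → p n = 2 * (-1:ℝ) ^ n := by
    have H : ∀ n : ℕ, 1 ≤ n → (n < M → p n = 2 * (-1:ℝ) ^ n) := by
      refine Nat.le_induction ?_ ?_
      · intro _
        have h := key 1
        rw [if_pos (le_refl 1), if_neg (by omega), if_neg (by omega), if_neg (by omega),
          if_neg (by omega), if_pos rfl] at h
        simp only [Nat.sub_self, hp0] at h
        norm_num
        linarith
      · intro n hn IH hlt
        have h := key (n+1)
        rw [if_pos (by omega), if_neg (by omega), if_neg (by omega), if_neg (by omega),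
          if_neg (by omega), if_neg (by omega)] at h
        rw [Nat.add_sub_cancel, IH (by omega)] at h
        rw [pow_succ]
        linarith
    intro n h1 h2; exact H n h1 h2
  -- Step 4: p M
  have hP0 : p M = 2 * (-1:ℝ) ^ M + (1-r)^2 := by
    have h := key M
    rw [if_pos (by omega), if_pos (le_refl M), if_neg (by omega), if_neg (by omega),
      if_neg (by omega), if_neg (by omega)] at h
    rw [Nat.sub_self, hp0, hsmall (M-1) (by omega) (by omega)] at h
    have e : (-1:ℝ)^M = (-1)^(M-1) * (-1) := by
      conv_lhs => rw [show M = (M-1)+1 by omega]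
      rw [pow_succ]
    rw [e]; linarith
  -- Step 5: p (M+1)
  have hP1 : p (M+1) = 2 * (-1:ℝ) ^ (M+1) + (-2 + 8*r - 5*r^2) := by
    have h := key (M+1)
    rw [if_pos (by omega), if_pos (by omega), if_pos (le_refl (M+1)), if_neg (by omega),
      if_neg (by omega), if_neg (by omega)] at h
    rw [Nat.add_sub_cancel, Nat.sub_self, hp0,
      show M+1-M = 1 by omega, hsmall 1 (by omega) (by omega), hP0] at h
    rw [pow_succ]
    linear_combination h
  -- Step 6: p (M+2)
  have hP2 : p (M+2) = 2 * (-1:ℝ) ^ (M+2) + (2 - 16*r + 12*r^2) := by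
    have h := key (M+2)
    rw [if_pos (by omega), if_pos (by omega), if_pos (by omega), if_pos (le_refl (M+2)),
      if_neg (by omega), if_neg (by omega)] at h
    rw [show M+2-1 = M+1 by omega, show M+2-M = 2 by omega, show M+2-(M+1) = 1 by omega,
      Nat.sub_self, hp0, hsmall 2 (by omega) (by omega), hsmall 1 (by omega) (by omega),
      hP1] at h
    rw [show M+2 = (M+1)+1 by omega, pow_succ]
    linear_combination h
  -- Step 7: main induction
  have main : ∀ k : ℕ, 2 ≤ k → k ≤ M - 1 →
      p (M + k) = 2 * (-1:ℝ) ^ (M+k)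
        + (-1:ℝ)^k * (2 - 4*r^2 - 8*r*(1-r)*(k:ℝ)) := by
    have H : ∀ k : ℕ, 2 ≤ k → (k ≤ M - 1 →
        p (M + k) = 2 * (-1:ℝ) ^ (M+k)
          + (-1:ℝ)^k * (2 - 4*r^2 - 8*r*(1-r)*(k:ℝ))) := by
      refine Nat.le_induction ?_ ?_
      · intro _
        rw [hP2]
        norm_num
        ring
      · intro k hk2 IH hkM
        obtain ⟨j, rfl⟩ : ∃ j, k = j + 1 := ⟨k - 1, by omega⟩
        have h := key (M + (j + 1) + 1)
        rw [if_pos (by omega), if_pos (by omega), if_pos (by omega), if_pos (by omega),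
          if_neg (by omega), if_neg (by omega)] at h
        rw [show M+(j+1)+1-1 = M+(j+1) by omega, show M+(j+1)+1-M = j+2 by omega,
          show M+(j+1)+1-(M+1) = j+1 by omega, show M+(j+1)+1-(M+2) = j by omega,
          hsmall (j+2) (by omega) (by omega), hsmall (j+1) (by omega) (by omega),
          hsmall j (by omega) (by omega), IH (by omega)] at h
        rw [show j+2 = (j+1)+1 by omega, pow_succ] at h
        rw [show M+(j+1+1) = (M+(j+1))+1 by omega, pow_succ, pow_succ]
        push_cast at h ⊢
        linear_combination h
    intro k h1 h2; exact H k h1 h2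
  -- Conclusion
  intro n hn1 hn2
  obtain ⟨k, rfl⟩ : ∃ k, n = M + k := ⟨n - M, by omega⟩
  rw [main k (by omega) (by omega)]
  have e : (-1:ℝ)^(M+k+M) = (-1:ℝ)^k := by
    rw [show M+k+M = k + 2*M by ring, pow_add, pow_mul]
    norm_num
  rw [e]
  push_cast
  ring
end

section
/- For the modified cubic convolution spline scheme with constant kernel K ≡ 1, the weights are q_0 = 5h/8, q_1 = 5h/6, q_2 = 25h/24, and q_j = h for all j ≥ 3. -/
open MeasureTheory intervalIntegral Set

/-- The centred cubic B-spline `B(t) = b³(t+2)`, with support `(-2,2)`. -/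
noncomputable def Bc (t : ℝ) : ℝ := bspline 3 (t + 2)

lemma bspline0 (τ : ℝ) : bspline 0 τ = if 0 ≤ τ ∧ τ < 1 then 1 else 0 := rfl
lemma bspline1 (τ : ℝ) : bspline 1 τ = τ * bspline 0 τ + (2 - τ) * bspline 0 (τ - 1) := by
  show (τ / ((0:ℕ)+1)) * _ + ((((0:ℕ):ℝ) + 2 - τ) / ((0:ℕ)+1)) * _ = _
  push_cast; ring
lemma bspline2 (τ : ℝ) : bspline 2 τ = (τ/2) * bspline 1 τ + ((3 - τ)/2) * bspline 1 (τ - 1) := by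
  show (τ / ((1:ℕ)+1)) * _ + ((((1:ℕ):ℝ) + 2 - τ) / ((1:ℕ)+1)) * _ = _
  push_cast; ring_nf
lemma bspline3 (τ : ℝ) : bspline 3 τ = (τ/3) * bspline 2 τ + ((4 - τ)/3) * bspline 2 (τ - 1) := by
  show (τ / ((2:ℕ)+1)) * _ + ((((2:ℕ):ℝ) + 2 - τ) / ((2:ℕ)+1)) * _ = _
  push_cast; ring_nf

set_option maxHeartbeats 2000000 in
lemma Bc_eval (t : ℝ) : Bc t =
    if t < -2 then 0
    else if t < -1 then (t+2)^3/6
    else if t < 0 then (-3*(t+2)^3+12*(t+2)^2-12*(t+2)+4)/6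
    else if t < 1 then (3*(t+2)^3-24*(t+2)^2+60*(t+2)-44)/6
    else if t < 2 then (2-t)^3/6
    else 0 := by
  show bspline 3 (t+2) = _
  rw [bspline3]
  simp only [bspline2, bspline1, bspline0]
  split_ifs <;>
    first
      | (exfalso; linarith)
      | ring1
      | (exfalso; simp only [not_and_or, not_le, not_lt] at *; casesm* _ ∨ _ <;> linarith)

lemma Bc_zero_le {t : ℝ} (h : t ≤ -2) : Bc t = 0 := by
  rw [Bc_eval]
  split_ifs <;> first | rfl | linarith |
    (have h' : t = -2 := (by linarith); subst h'; norm_num)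

lemma Bc_zero_ge {t : ℝ} (h : 2 ≤ t) : Bc t = 0 := by
  rw [Bc_eval]; split_ifs <;> first | rfl | linarith

lemma Bc_eq1 {t : ℝ} (h1 : -2 ≤ t) (h2 : t ≤ -1) : Bc t = 4/3 + 2*t + t^2 + (1/6)*t^3 := by
  rw [Bc_eval]
  split_ifs <;> first | ring1 | linarith |
    (have h' : t = -1 := (by linarith); subst h'; norm_num)

lemma Bc_eq2 {t : ℝ} (h1 : -1 ≤ t) (h2 : t ≤ 0) : Bc t = 2/3 - t^2 - (1/2)*t^3 := by
  rw [Bc_eval]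
  split_ifs <;> first | ring1 | linarith |
    (have h' : t = 0 := (by linarith); subst h'; norm_num)

lemma Bc_eq3 {t : ℝ} (h1 : 0 ≤ t) (h2 : t ≤ 1) : Bc t = 2/3 - t^2 + (1/2)*t^3 := by
  rw [Bc_eval]
  split_ifs <;> first | ring1 | linarith |
    (have h' : t = 1 := (by linarith); subst h'; norm_num)

lemma Bc_eq4 {t : ℝ} (h1 : 1 ≤ t) (h2 : t ≤ 2) : Bc t = 4/3 - 2*t + t^2 - (1/6)*t^3 := by
  rw [Bc_eval]
  split_ifs <;> first | ring1 | linarith |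
    (have h' : t = 2 := (by linarith); subst h'; norm_num)

lemma Bc_measurable : Measurable Bc := by
  have : ∀ n, Measurable (bspline n) := by
    intro n
    induction n with
    | zero =>
        simp only [bspline]
        exact Measurable.ite (by
          have : {τ : ℝ | 0 ≤ τ ∧ τ < 1} = Ico 0 1 := rfl
          measurability) measurable_const measurable_const
    | succ m ih =>
        simp only [bspline]
        fun_prop
  exact (this 3).comp (by fun_prop)

lemma Bc_bound (t : ℝ) : |Bc t| ≤ 1 := by
  rw [Bc_eval, abs_le]
  split_ifs <;> constructor <;>
    nlinarith [sq_nonneg (t+2), sq_nonneg (t+1), sq_nonneg t, sq_nonneg (t-1), sq_nonneg (t-2),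
      sq_nonneg (t+3), sq_nonneg (t-3)]

lemma Bc_intervalIntegrable (a b : ℝ) : IntervalIntegrable Bc volume a b := by
  rw [intervalIntegrable_iff]
  refine Integrable.mono' (g := fun _ => (1:ℝ)) ((integrableOn_const_iff).mpr (Or.inr ?_))
    Bc_measurable.aestronglyMeasurable (ae_of_all _ fun x => by simpa using Bc_bound x)
  exact measure_Ioc_lt_top

lemma integral_cubic (a b c0 c1 c2 c3 : ℝ) :
    ∫ x in a..b, (c0 + c1 * x + c2 * x ^ 2 + c3 * x ^ 3) =
      (c0 * b + c1 * b ^ 2 / 2 + c2 * b ^ 3 / 3 + c3 * b ^ 4 / 4)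
        - (c0 * a + c1 * a ^ 2 / 2 + c2 * a ^ 3 / 3 + c3 * a ^ 4 / 4) := by
  have h1 : IntervalIntegrable (fun x : ℝ => c0 + c1 * x + c2 * x ^ 2) volume a b :=
    (Continuous.intervalIntegrable (by continuity) _ _)
  have h2 : IntervalIntegrable (fun x : ℝ => c3 * x ^ 3) volume a b :=
    (Continuous.intervalIntegrable (by continuity) _ _)
  have h3 : IntervalIntegrable (fun x : ℝ => c0 + c1 * x) volume a b :=
    (Continuous.intervalIntegrable (by continuity) _ _)
  have h4 : IntervalIntegrable (fun x : ℝ => c2 * x ^ 2) volume a b :=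
    (Continuous.intervalIntegrable (by continuity) _ _)
  have h5 : IntervalIntegrable (fun x : ℝ => (c0 : ℝ)) volume a b := intervalIntegrable_const
  have h6 : IntervalIntegrable (fun x : ℝ => c1 * x) volume a b :=
    (Continuous.intervalIntegrable (by continuity) _ _)
  rw [intervalIntegral.integral_add h1 h2, intervalIntegral.integral_add h3 h4,
    intervalIntegral.integral_add h5 h6,
    intervalIntegral.integral_const_mul, intervalIntegral.integral_const_mul,
    intervalIntegral.integral_const_mul, integral_pow, integral_pow, integral_id,
    intervalIntegral.integral_const]
  simp only [smul_eq_mul]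
  ring

lemma intBc1 : ∫ x in (-2:ℝ)..(-1), Bc x = 1/24 := by
  rw [intervalIntegral.integral_congr (g := fun x => 4/3 + 2*x + 1*x^2 + (1/6)*x^3)
    (fun x hx => by
      rw [Set.uIcc_of_le (by norm_num)] at hx
      rw [Bc_eq1 hx.1 hx.2]; ring), integral_cubic]
  norm_num

lemma intBc2 : ∫ x in (-1:ℝ)..0, Bc x = 11/24 := by
  rw [intervalIntegral.integral_congr (g := fun x => 2/3 + 0*x + (-1)*x^2 + (-1/2)*x^3)
    (fun x hx => by
      rw [Set.uIcc_of_le (by norm_num)] at hx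
      rw [Bc_eq2 hx.1 hx.2]; ring), integral_cubic]
  norm_num

lemma intBc3 : ∫ x in (0:ℝ)..1, Bc x = 11/24 := by
  rw [intervalIntegral.integral_congr (g := fun x => 2/3 + 0*x + (-1)*x^2 + (1/2)*x^3)
    (fun x hx => by
      rw [Set.uIcc_of_le (by norm_num)] at hx
      rw [Bc_eq3 hx.1 hx.2]; ring), integral_cubic]
  norm_num

lemma intBc4 : ∫ x in (1:ℝ)..2, Bc x = 1/24 := by
  rw [intervalIntegral.integral_congr (g := fun x => 4/3 + (-2)*x + 1*x^2 + (-1/6)*x^3)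
    (fun x hx => by
      rw [Set.uIcc_of_le (by norm_num)] at hx
      rw [Bc_eq4 hx.1 hx.2]; ring), integral_cubic]
  norm_num

lemma intBc_right {a b : ℝ} (ha : 2 ≤ a) (hab : a ≤ b) : ∫ x in a..b, Bc x = 0 := by
  rw [intervalIntegral.integral_congr (g := fun _ => (0:ℝ))
    (fun x hx => by
      rw [Set.uIcc_of_le hab] at hx
      exact Bc_zero_ge (le_trans ha hx.1))]
  simp

lemma intBc_left {a b : ℝ} (hb : b ≤ -2) (hab : a ≤ b) : ∫ x in a..b, Bc x = 0 := by
  rw [intervalIntegral.integral_congr (g := fun _ => (0:ℝ))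
    (fun x hx => by
      rw [Set.uIcc_of_le hab] at hx
      exact Bc_zero_le (le_trans hx.2 hb))]
  simp

lemma scale_int {h : ℝ} (hh : 0 < h) (g : ℝ → ℝ) :
    ∫ t in Set.Ioi (0:ℝ), g (t / h) = h * ∫ x in Set.Ioi (0:ℝ), g x := by
  simp only [div_eq_mul_inv]
  rw [MeasureTheory.integral_comp_mul_right_Ioi g 0 (inv_pos.mpr hh)]
  simp [smul_eq_mul, inv_inv]

lemma cutoff_int (g : ℝ → ℝ) (M : ℝ) (hM : 0 ≤ M) (hg : ∀ x, M < x → g x = 0) :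
    ∫ x in Set.Ioi (0:ℝ), g x = ∫ x in (0:ℝ)..M, g x := by
  rw [intervalIntegral.integral_of_le hM]
  refine MeasureTheory.setIntegral_eq_of_subset_of_ae_diff_eq_zero
    measurableSet_Ioi.nullMeasurableSet Set.Ioc_subset_Ioi_self
    (MeasureTheory.ae_of_all _ fun x hx => ?_)
  refine hg x ?_
  rcases hx with ⟨hx1, hx2⟩
  simp only [Set.mem_Ioc, not_and, not_le] at hx2
  exact hx2 hx1

/-- The modified cubic spline basis functions with parabolic runout at `t = 0`. -/
noncomputable def φmod : ℕ → ℝ → ℝ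
  | 0, t => Bc t + 3 * Bc (t + 1)
  | 1, t => Bc (t - 1) - 3 * Bc (t + 1)
  | 2, t => Bc (t - 2) + Bc (t + 1)
  | (j + 3), t => Bc (t - ((j : ℝ) + 3))

lemma Bc_shift_ii (a b c : ℝ) :
    IntervalIntegrable (fun x => Bc (x + c)) volume a b := by
  simpa using (Bc_intervalIntegrable (a + c) (b + c)).comp_add_right c

lemma q0_calc : ∫ x in (0:ℝ)..2, (Bc x + 3 * Bc (x + 1)) = 5/8 := by
  rw [intervalIntegral.integral_add (Bc_intervalIntegrable 0 2)
    ((Bc_shift_ii 0 2 1).const_mul 3), intervalIntegral.integral_const_mul,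
    intervalIntegral.integral_comp_add_right (fun x => Bc x) 1,
    ← intervalIntegral.integral_add_adjacent_intervals (Bc_intervalIntegrable 0 1)
      (Bc_intervalIntegrable 1 2), intBc3, intBc4]
  norm_num
  rw [← intervalIntegral.integral_add_adjacent_intervals (Bc_intervalIntegrable 1 2)
      (Bc_intervalIntegrable 2 3), intBc4, intBc_right le_rfl (by norm_num)]
  norm_num

lemma Bc_shift_ii' (a b c : ℝ) :
    IntervalIntegrable (fun x => Bc (x - c)) volume a b := by
  simpa [sub_eq_add_neg] using Bc_shift_ii a b (-c)

lemma intBc_full : ∫ x in (-2:ℝ)..2, Bc x = 1 := by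
  rw [← intervalIntegral.integral_add_adjacent_intervals (Bc_intervalIntegrable (-2) 0)
      (Bc_intervalIntegrable 0 2),
    ← intervalIntegral.integral_add_adjacent_intervals (Bc_intervalIntegrable (-2) (-1))
      (Bc_intervalIntegrable (-1) 0),
    ← intervalIntegral.integral_add_adjacent_intervals (Bc_intervalIntegrable 0 1)
      (Bc_intervalIntegrable 1 2), intBc1, intBc2, intBc3, intBc4]
  norm_num

lemma q1_calc : ∫ x in (0:ℝ)..3, (Bc (x - 1) - 3 * Bc (x + 1)) = 5/6 := by
  rw [intervalIntegral.integral_sub (Bc_shift_ii' 0 3 1)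
    ((Bc_shift_ii 0 3 1).const_mul 3), intervalIntegral.integral_const_mul,
    intervalIntegral.integral_comp_sub_right (fun x => Bc x) 1,
    intervalIntegral.integral_comp_add_right (fun x => Bc x) 1]
  norm_num
  rw [← intervalIntegral.integral_add_adjacent_intervals (Bc_intervalIntegrable (-1) 1)
      (Bc_intervalIntegrable 1 2),
    ← intervalIntegral.integral_add_adjacent_intervals (Bc_intervalIntegrable (-1) 0)
      (Bc_intervalIntegrable 0 1),
    ← intervalIntegral.integral_add_adjacent_intervals (Bc_intervalIntegrable 1 2)
      (Bc_intervalIntegrable 2 4), intBc2, intBc3, intBc4,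
    intBc_right le_rfl (by norm_num)]
  norm_num

lemma q2_calc : ∫ x in (0:ℝ)..4, (Bc (x - 2) + Bc (x + 1)) = 25/24 := by
  rw [intervalIntegral.integral_add (Bc_shift_ii' 0 4 2) (Bc_shift_ii 0 4 1),
    intervalIntegral.integral_comp_sub_right (fun x => Bc x) 2,
    intervalIntegral.integral_comp_add_right (fun x => Bc x) 1]
  norm_num
  rw [intBc_full,
    ← intervalIntegral.integral_add_adjacent_intervals (Bc_intervalIntegrable 1 2)
      (Bc_intervalIntegrable 2 5), intBc4, intBc_right le_rfl (by norm_num)]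
  norm_num

lemma qj_calc (c : ℝ) (hc : 3 ≤ c) : ∫ x in (0:ℝ)..(c+2), Bc (x - c) = 1 := by
  rw [intervalIntegral.integral_comp_sub_right (fun x => Bc x) c]
  norm_num
  rw [← intervalIntegral.integral_add_adjacent_intervals (Bc_intervalIntegrable (-c) (-2))
      (Bc_intervalIntegrable (-2) 2), intBc_full,
    intBc_left le_rfl (by linarith)]
  norm_num

/-- For the modified cubic convolution spline scheme with constant kernel `K ≡ 1`, the weights
`q_j = ∫_0^∞ φ_j(t/h) dt` are `q_0 = 5h/8`, `q_1 = 5h/6`, `q_2 = 25h/24`, and `q_j = h` for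
`j ≥ 3`. -/
theorem stmt_17 (h : ℝ) (hh : 0 < h) (q : ℕ → ℝ)
    (hq : ∀ j : ℕ, q j = ∫ t in Set.Ioi (0 : ℝ), φmod j (t / h)) :
    q 0 = 5 * h / 8 ∧ q 1 = 5 * h / 6 ∧ q 2 = 25 * h / 24 ∧ ∀ j : ℕ, 3 ≤ j → q j = h := by
  refine ⟨?_, ?_, ?_, ?_⟩
  · rw [hq 0]
    simp only [φmod]
    rw [scale_int hh (fun s => Bc s + 3 * Bc (s + 1)),
      cutoff_int _ 2 (by norm_num) (fun x hx => by
        rw [Bc_zero_ge (by linarith), Bc_zero_ge (by linarith)]; ring), q0_calc]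
    ring
  · rw [hq 1]
    simp only [φmod]
    rw [scale_int hh (fun s => Bc (s - 1) - 3 * Bc (s + 1)),
      cutoff_int _ 3 (by norm_num) (fun x hx => by
        rw [Bc_zero_ge (by linarith), Bc_zero_ge (by linarith)]; ring), q1_calc]
    ring
  · rw [hq 2]
    simp only [φmod]
    rw [scale_int hh (fun s => Bc (s - 2) + Bc (s + 1)),
      cutoff_int _ 4 (by norm_num) (fun x hx => by
        rw [Bc_zero_ge (by linarith), Bc_zero_ge (by linarith)]; ring), q2_calc]
    ring
  · intro j hj
    obtain ⟨k, hk⟩ := Nat.le.dest hj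
    have hjk : j = k + 3 := by omega
    subst hjk
    rw [hq (k + 3)]
    simp only [φmod]
    have hc : (3:ℝ) ≤ (k:ℝ) + 3 := by
      have := Nat.cast_nonneg (α := ℝ) k; linarith
    rw [scale_int hh (fun s => Bc (s - ((k:ℝ) + 3))),
      cutoff_int _ (((k:ℝ) + 3) + 2) (by positivity) (fun x hx => by
        exact Bc_zero_ge (by linarith)),
      qj_calc _ hc]
    ring
end

section
/- Let (p_n) satisfy p_0 = 1, p_1 = -4/3, and suppose |p_n| ≤ (11/15) Γ_{n-1} + (8/5) Γ_{n-(M-1)} for all n ≥ 2, where Γ_k = max_{0 ≤ j ≤ k} |p_j| (and Γ_k = Γ_0 for k < 0, with M ≥ 5 an integer). Then Γ_n ≤ 6 Γ_{n-(M-1)} for all n ≥ M-1, and consequently |p_n| ≤ (4/3) · 6^{⌈n/(M-1)⌉} for all n ≥ 0. -/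
/-- Running maximum `Γ_k = max_{0 ≤ j ≤ k} |p_j|`. -/
noncomputable def runmax (p : ℕ → ℝ) (k : ℕ) : ℝ :=
  (Finset.range (k + 1)).sup' ⟨0, Finset.mem_range.mpr (Nat.succ_pos k)⟩ fun j => |p j|

lemma le_runmax (p : ℕ → ℝ) {j k : ℕ} (h : j ≤ k) : |p j| ≤ runmax p k := by
  unfold runmax
  exact Finset.le_sup' (fun j => |p j|) (Finset.mem_range.2 (Nat.lt_succ_of_le h))

lemma runmax_le_iff (p : ℕ → ℝ) (k : ℕ) (x : ℝ) :
    runmax p k ≤ x ↔ ∀ j ≤ k, |p j| ≤ x := by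
  rw [runmax]; refine (Finset.sup'_le_iff _ _).trans ?_
  constructor
  · intro h j hj; exact h j (Finset.mem_range.2 (Nat.lt_succ_of_le hj))
  · intro h j hj; exact h j (Nat.lt_succ_iff.1 (Finset.mem_range.1 hj))

lemma runmax_mono (p : ℕ → ℝ) {a b : ℕ} (h : a ≤ b) : runmax p a ≤ runmax p b := by
  rw [runmax_le_iff]; intro j hj; exact le_runmax p (hj.trans h)

lemma runmax_nonneg (p : ℕ → ℝ) (k : ℕ) : 0 ≤ runmax p k :=
  (abs_nonneg _).trans (le_runmax p (Nat.zero_le k))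

lemma nat_div_step (m n : ℕ) (hm : 1 ≤ m) (hn : 1 ≤ n) :
    (n - m + (m - 1)) / m + 1 ≤ (n + (m - 1)) / m := by
  rcases le_or_gt m n with h | h
  · obtain ⟨t, rfl⟩ := Nat.exists_eq_add_of_le h
    have h1 : m + t - m = t := by omega
    have h2 : m + t + (m - 1) = t + (m - 1) + m := by omega
    rw [h1, h2, Nat.add_div_right _ (by omega)]
  · have h0 : n - m = 0 := by omega
    rw [h0, Nat.zero_add, Nat.div_eq_of_lt (by omega)]
    exact (Nat.le_div_iff_mul_le (by omega)).2 (by omega)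

/-- The recursive-maximum stability argument for the modified cubic scheme with the step
kernel: if `p_0 = 1`, `p_1 = -4/3` and `|p_n| ≤ (11/15)Γ_{n-1} + (8/5)Γ_{n-(M-1)}` for
`n ≥ 2`, then `Γ_n ≤ 6 Γ_{n-(M-1)}` for `n ≥ M-1` and `|p_n| ≤ (4/3)·6^{⌈n/(M-1)⌉}`. -/
theorem stmt_18 (M : ℕ) (hM : 5 ≤ M) (p : ℕ → ℝ)
    (hp0 : p 0 = 1) (hp1 : p 1 = -4 / 3)
    (hrec : ∀ n : ℕ, 2 ≤ n →
      |p n| ≤ 11 / 15 * runmax p (n - 1) + 8 / 5 * runmax p (n - (M - 1))) :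
    (∀ n : ℕ, M - 1 ≤ n → runmax p n ≤ 6 * runmax p (n - (M - 1))) ∧
    (∀ n : ℕ, |p n| ≤ 4 / 3 * (6 : ℝ) ^ ((n + (M - 2)) / (M - 1))) := by
  have h0 : runmax p 0 = 1 := by simp [runmax, hp0]
  have key : ∀ n : ℕ, runmax p n ≤ 6 * runmax p (n - (M - 1)) := by
    intro n
    induction n using Nat.strong_induction_on with
    | _ n ih =>
      match n, ih with
      | 0, _ => simp only [Nat.zero_sub, h0]; norm_num
      | 1, _ =>
        have e : 1 - (M - 1) = 0 := by omega
        rw [e, h0, runmax_le_iff]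
        intro j hj
        interval_cases j
        · rw [hp0]; norm_num
        · rw [hp1]; rw [abs_le]; constructor <;> norm_num
      | (k+2), ih =>
        rw [runmax_le_iff]
        intro j hj
        have h2 := ih (k+1) (by omega)
        have h3 : runmax p (k+1 - (M-1)) ≤ runmax p (k+2 - (M-1)) :=
          runmax_mono p (by omega)
        rcases Nat.lt_or_ge j (k+2) with hlt | hge
        · have h1 : |p j| ≤ runmax p (k+1) := le_runmax p (by omega)
          linarith
        · have hj2 : j = k+2 := by omega
          subst hj2
          have h4 := hrec (k+2) (by omega)
          have h5 : k+2-1 = k+1 := rfl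
          rw [h5] at h4
          have h6 := runmax_nonneg p (k+2 - (M-1))
          linarith
  have key2 : ∀ n, runmax p n ≤ 4/3 * 6 ^ ((n + (M-2))/(M-1)) := by
    intro n
    induction n using Nat.strong_induction_on with
    | _ n ih =>
      rcases Nat.eq_zero_or_pos n with rfl | hn
      · have e : (0 + (M-2))/(M-1) = 0 := Nat.div_eq_of_lt (by omega)
        rw [h0, e]; norm_num
      · have h1 := key n
        have h2 := ih (n - (M-1)) (by omega)
        have h3 : (n - (M-1) + (M-2))/(M-1) + 1 ≤ (n + (M-2))/(M-1) := by
          have h := nat_div_step (M-1) n (by omega) hn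
          have e : (M-1) - 1 = M - 2 := by omega
          rwa [e] at h
        have h4 : (6:ℝ) ^ ((n - (M-1) + (M-2))/(M-1) + 1) ≤ 6 ^ ((n + (M-2))/(M-1)) :=
          pow_le_pow_right₀ (by norm_num) h3
        rw [pow_succ] at h4
        linarith
  exact ⟨fun n _ => key n, fun n => le_trans (le_runmax p le_rfl) (key2 n)⟩
end
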